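/- Euler's pentagonal number identity: (q;q)_∞ = ∑_{n∈ℤ} (-1)^n q^{n(3n-1)/2}, equivalently f(-q) = ∑_{n=0}^{∞} (-1)^n q^{n(3n-1)/2} + ∑_{n=1}^∞ (-1)^n q^{n(3n+1)/2}. -/

import Mathlib

open scoped Classical

/-- `fps k` is `(q^k; q^k)_∞ = ∏_{n≥1} (1 - q^{kn})`, defined coefficient-wise
via truncated products (valid for `k ≥ 1`). -/
noncomputable def fps (k : ℕ) : PowerSeries ℤ :=
  PowerSeries.mk fun n =>
    PowerSeries.coeff n
      (∏ i ∈ Finset.range (n + 1), (1 - (PowerSeries.X : PowerSeries ℤ) ^ (k * (i + 1))))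

open Finset

/-- Exceptional (pentagonal) strict partitions, as finsets:
`{n+1, …, 2n}` (sum `n(3n+1)/2`) or `{n+1, …, 2n+1}` (sum `(n+1)(3(n+1)-1)/2`). -/
def Exc (S : Finset ℕ) : Prop :=
  ∃ n : ℕ, S = Finset.Icc (n + 1) (2 * n) ∨ S = Finset.Icc (n + 1) (2 * n + 1)

/-- Length of the maximal "staircase" of consecutive elements at the top of `S`. -/
noncomputable def stair (S : Finset ℕ) (h : S.Nonempty) : ℕ :=
  Nat.findGreatest (fun j => ∀ i < j, S.max' h - i ∈ S) (S.max' h)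

/-- Franklin's involution on non-pentagonal strict partitions. -/
noncomputable def franklin (S : Finset ℕ) : Finset ℕ :=
  if h : S.Nonempty then
    if S.min' h ≤ stair S h then
      insert (S.max' h + 1) ((S.erase (S.min' h)).erase (S.max' h - S.min' h + 1))
    else
      insert (stair S h) (insert (S.max' h - stair S h) (S.erase (S.max' h)))
  else ∅

lemma stair_mem (S : Finset ℕ) (h : S.Nonempty) :
    ∀ i < stair S h, S.max' h - i ∈ S := by
  have h2 := Nat.findGreatest_spec (P := fun j => ∀ i < j, S.max' h - i ∈ S)
    (Nat.zero_le (S.max' h)) (fun i hi => absurd hi (Nat.not_lt_zero i))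
  exact h2

lemma stair_le (S : Finset ℕ) (h : S.Nonempty) : stair S h ≤ S.max' h :=
  Nat.findGreatest_le _

lemma stair_pos (S : Finset ℕ) (h : S.Nonempty) (h0 : 0 ∉ S) : 1 ≤ stair S h := by
  have hM : 1 ≤ S.max' h := by
    have := S.max'_mem h
    rcases Nat.eq_zero_or_pos (S.max' h) with h' | h'
    · rw [h'] at this; exact absurd this h0
    · exact h'
  refine Nat.le_findGreatest hM ?_
  intro i hi
  have : i = 0 := by omega
  subst this
  simpa using S.max'_mem h

lemma stair_not_mem (S : Finset ℕ) (h : S.Nonempty) (h0 : 0 ∉ S) :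
    S.max' h - stair S h ∉ S := by
  rcases eq_or_lt_of_le (stair_le S h) with he | hlt
  · rw [he]; simpa using h0
  · have h2 := Nat.findGreatest_is_greatest (P := fun j => ∀ i < j, S.max' h - i ∈ S)
      (n := S.max' h) (k := stair S h + 1) (Nat.lt_succ_self _) hlt
    intro hmem
    apply h2
    intro i hi
    rcases Nat.lt_succ_iff_lt_or_eq.mp hi with hi' | rfl
    · exact stair_mem S h i hi'
    · exact hmem

lemma franklin_caseA (S : Finset ℕ) (h0 : 0 ∉ S) (hne : S.Nonempty) (hexc : ¬Exc S)
    (hst : S.min' hne ≤ stair S hne) :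
    0 ∉ franklin S ∧ (∑ x ∈ franklin S, x) = (∑ x ∈ S, x) ∧
      (franklin S).card + 1 = S.card ∧ ¬Exc (franklin S) ∧ franklin (franklin S) = S := by
  set M := S.max' hne with hM
  set s := S.min' hne with hsdef
  set t := stair S hne with ht
  have hmem := stair_mem S hne
  have hMt := stair_not_mem S hne h0
  have htM : t ≤ M := stair_le S hne
  have hsmem : s ∈ S := S.min'_mem hne
  have hMmem : M ∈ S := S.max'_mem hne
  have hs1 : 1 ≤ s := Nat.one_le_iff_ne_zero.mpr (fun h => h0 (h ▸ hsmem))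
  have hsM : s ≤ M := S.min'_le M hMmem
  have hlb : ∀ x ∈ S, s ≤ x := fun x hx => S.min'_le x hx
  have hub : ∀ x ∈ S, x ≤ M := fun x hx => S.le_max' x hx
  have hb : s ≤ M - (s - 1) := hlb _ (hmem (s - 1) (by omega))
  have h2s : 2 * s ≤ M := by
    by_contra hcon
    have hSIcc : S = Finset.Icc s M := by
      apply Finset.Subset.antisymm
      · intro x hx; rw [Finset.mem_Icc]; exact ⟨hlb x hx, hub x hx⟩
      · intro x hx
        rw [Finset.mem_Icc] at hx
        have hxx : M - (M - x) = x := by omega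
        rw [← hxx]
        exact hmem (M - x) (by omega)
    exact hexc ⟨s - 1, Or.inr (by rw [hSIcc]; congr 1 <;> omega)⟩
  have hbmem : M - s + 1 ∈ S := by
    have hh : M - s + 1 = M - (s - 1) := by omega
    rw [hh]; exact hmem (s - 1) (by omega)
  have hM1 : M + 1 ∉ S := fun hc => by have := hub _ hc; omega
  set R := (S.erase s).erase (M - s + 1) with hR
  have hMR : M + 1 ∉ R := fun hc => hM1 (Finset.mem_of_mem_erase (Finset.mem_of_mem_erase hc))
  have hRmem : ∀ x, x ∈ R ↔ x ∈ S ∧ x ≠ s ∧ x ≠ M - s + 1 := by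
    intro x
    rw [hR, Finset.mem_erase, Finset.mem_erase]
    tauto
  have hfr : franklin S = insert (M + 1) R := by
    unfold franklin
    rw [dif_pos hne, if_pos hst]
  have hdecomp : S = insert s (insert (M - s + 1) R) := by
    rw [hR, Finset.insert_erase (Finset.mem_erase.mpr ⟨by omega, hbmem⟩),
      Finset.insert_erase hsmem]
  have hsnotin : s ∉ insert (M - s + 1) R := by
    intro hc
    rcases Finset.mem_insert.mp hc with h | h
    · omega
    · exact ((hRmem s).mp h).2.1 rfl
  have hbnotin : M - s + 1 ∉ R := fun hc => ((hRmem _).mp hc).2.2 rfl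
  have hsum : (∑ x ∈ franklin S, x) = ∑ x ∈ S, x := by
    rw [hfr, Finset.sum_insert hMR]
    conv_rhs => rw [hdecomp]
    rw [Finset.sum_insert hsnotin, Finset.sum_insert hbnotin]
    omega
  have hcard : (franklin S).card + 1 = S.card := by
    rw [hfr, Finset.card_insert_of_notMem hMR]
    conv_rhs => rw [hdecomp]
    rw [Finset.card_insert_of_notMem hsnotin, Finset.card_insert_of_notMem hbnotin]
  have h0' : 0 ∉ franklin S := by
    rw [hfr]
    intro hc
    rcases Finset.mem_insert.mp hc with h | h
    · omega
    · exact h0 ((hRmem 0).mp h).1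
  have hne' : (franklin S).Nonempty := by rw [hfr]; exact Finset.insert_nonempty _ _
  have hub' : ∀ x ∈ franklin S, x ≤ M + 1 := by
    rw [hfr]
    intro x hx
    rcases Finset.mem_insert.mp hx with rfl | h
    · omega
    · have := hub x ((hRmem x).mp h).1; omega
  have hmax' : (franklin S).max' hne' = M + 1 :=
    le_antisymm (Finset.max'_le _ _ _ hub')
      (Finset.le_max' _ _ (by rw [hfr]; exact Finset.mem_insert_self _ _))
  have hlb' : ∀ x ∈ franklin S, s + 1 ≤ x := by
    rw [hfr]
    intro x hx
    rcases Finset.mem_insert.mp hx with rfl | h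
    · omega
    · have h1 := hlb x ((hRmem x).mp h).1
      have h2 := ((hRmem x).mp h).2.1
      omega
  have hmin' : s + 1 ≤ (franklin S).min' hne' := hlb' _ (Finset.min'_mem _ _)
  have hbnotin' : M - s + 1 ∉ franklin S := by
    rw [hfr]
    intro hc
    rcases Finset.mem_insert.mp hc with h | h
    · omega
    · exact ((hRmem _).mp h).2.2 rfl
  have hstair' : stair (franklin S) hne' = s := by
    apply le_antisymm
    · by_contra hcon
      push_neg at hcon
      have h2 := stair_mem (franklin S) hne' s hcon
      rw [hmax'] at h2
      have hh : M + 1 - s = M - s + 1 := by omega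
      rw [hh] at h2
      exact hbnotin' h2
    · refine Nat.le_findGreatest (by rw [hmax']; omega) ?_
      intro i hi
      rw [hmax']
      rcases Nat.eq_zero_or_pos i with rfl | hi1
      · rw [hfr]; simp
      · rw [hfr]
        apply Finset.mem_insert_of_mem
        have he : M + 1 - i = M - (i - 1) := by omega
        rw [he]
        exact (hRmem _).mpr ⟨hmem (i - 1) (by omega), by omega, by omega⟩
  have hff : franklin (franklin S) = S := by
    conv_lhs => rw [franklin]
    rw [dif_pos hne', if_neg (by rw [hstair']; omega), hstair', hmax']
    have he : M + 1 - s = M - s + 1 := by omega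
    have her : (franklin S).erase (M + 1) = R := by rw [hfr, Finset.erase_insert hMR]
    rw [he, her, ← hdecomp]
  have hexc' : ¬Exc (franklin S) := by
    rintro ⟨n, hn | hn⟩
    · have hne2 : (Finset.Icc (n + 1) (2 * n)).Nonempty := hn ▸ hne'
      have hn1 : 1 ≤ n := by
        obtain ⟨x, hx⟩ := hne2; rw [Finset.mem_Icc] at hx; omega
      have hMn : M + 1 = 2 * n := by
        have hx1 : M + 1 ∈ Finset.Icc (n + 1) (2 * n) :=
          hn ▸ (by rw [hfr]; exact Finset.mem_insert_self _ _)
        rw [Finset.mem_Icc] at hx1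
        have hx2 : (2 * n : ℕ) ∈ franklin S := hn ▸ Finset.mem_Icc.mpr ⟨by omega, le_refl _⟩
        have := hub' _ hx2
        omega
      have hsn : s + 1 ≤ n + 1 := hlb' _ (hn ▸ Finset.mem_Icc.mpr ⟨le_refl _, by omega⟩)
      have hnotI : M - s + 1 ∉ Finset.Icc (n + 1) (2 * n) := hn ▸ hbnotin'
      rw [Finset.mem_Icc] at hnotI
      push_neg at hnotI
      omega
    · have hMn : M + 1 = 2 * n + 1 := by
        have hx1 : M + 1 ∈ Finset.Icc (n + 1) (2 * n + 1) :=
          hn ▸ (by rw [hfr]; exact Finset.mem_insert_self _ _)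
        rw [Finset.mem_Icc] at hx1
        have hx2 : (2 * n + 1 : ℕ) ∈ franklin S := hn ▸ Finset.mem_Icc.mpr ⟨by omega, le_refl _⟩
        have := hub' _ hx2
        omega
      have hsn : s + 1 ≤ n + 1 := hlb' _ (hn ▸ Finset.mem_Icc.mpr ⟨le_refl _, by omega⟩)
      exact hbnotin' (hn ▸ Finset.mem_Icc.mpr ⟨by omega, by omega⟩)
  exact ⟨h0', hsum, hcard, hexc', hff⟩

lemma franklin_caseB (S : Finset ℕ) (h0 : 0 ∉ S) (hne : S.Nonempty) (hexc : ¬Exc S)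
    (hst : stair S hne < S.min' hne) :
    0 ∉ franklin S ∧ (∑ x ∈ franklin S, x) = (∑ x ∈ S, x) ∧
      S.card + 1 = (franklin S).card ∧ ¬Exc (franklin S) ∧ franklin (franklin S) = S := by
  set M := S.max' hne with hM
  set s := S.min' hne with hsdef
  set t := stair S hne with ht
  have hmem := stair_mem S hne
  have hMt := stair_not_mem S hne h0
  have htM : t ≤ M := stair_le S hne
  have ht1 : 1 ≤ t := stair_pos S hne h0
  have hsmem : s ∈ S := S.min'_mem hne
  have hMmem : M ∈ S := S.max'_mem hne
  have hs1 : 1 ≤ s := Nat.one_le_iff_ne_zero.mpr (fun h => h0 (h ▸ hsmem))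
  have hsM : s ≤ M := S.min'_le M hMmem
  have hlb : ∀ x ∈ S, s ≤ x := fun x hx => S.min'_le x hx
  have hub : ∀ x ∈ S, x ≤ M := fun x hx => S.le_max' x hx
  have hb : s ≤ M - (t - 1) := hlb _ (hmem (t - 1) (by omega))
  have h2t : 2 * t + 1 ≤ M := by
    by_contra hcon
    have hSIcc : S = Finset.Icc (t + 1) (2 * t) := by
      apply Finset.Subset.antisymm
      · intro x hx
        rw [Finset.mem_Icc]
        have := hlb x hx; have := hub x hx
        omega
      · intro x hx
        rw [Finset.mem_Icc] at hx
        have hxx : M - (M - x) = x := by omega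
        rw [← hxx]
        exact hmem (M - x) (by omega)
    exact hexc ⟨t, Or.inl hSIcc⟩
  have htnotinS : t ∉ S := fun hc => by have := hlb _ hc; omega
  set R := S.erase M with hR
  have hMnR : M ∉ R := Finset.notMem_erase _ _
  have hRmem : ∀ x, x ∈ R ↔ x ∈ S ∧ x ≠ M := by
    intro x; rw [hR, Finset.mem_erase]; tauto
  have hdecomp : S = insert M R := (Finset.insert_erase hMmem).symm
  have hMtnotin : M - t ∉ R := fun hc => hMt ((hRmem _).mp hc).1
  have htnotin : t ∉ insert (M - t) R := by
    intro hc
    rcases Finset.mem_insert.mp hc with h | h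
    · omega
    · exact htnotinS ((hRmem _).mp h).1
  have hfr : franklin S = insert t (insert (M - t) R) := by
    unfold franklin
    rw [dif_pos hne, if_neg (by omega)]
  have hsum : (∑ x ∈ franklin S, x) = ∑ x ∈ S, x := by
    rw [hfr, Finset.sum_insert htnotin, Finset.sum_insert hMtnotin]
    conv_rhs => rw [hdecomp]
    rw [Finset.sum_insert hMnR]
    omega
  have hcard : S.card + 1 = (franklin S).card := by
    rw [hfr, Finset.card_insert_of_notMem htnotin, Finset.card_insert_of_notMem hMtnotin]
    conv_lhs => rw [hdecomp]
    rw [Finset.card_insert_of_notMem hMnR]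
  have h0' : 0 ∉ franklin S := by
    rw [hfr]
    intro hc
    rcases Finset.mem_insert.mp hc with h | h
    · omega
    · rcases Finset.mem_insert.mp h with h' | h'
      · omega
      · exact h0 ((hRmem 0).mp h').1
  have hne' : (franklin S).Nonempty := by rw [hfr]; exact Finset.insert_nonempty _ _
  have hub' : ∀ x ∈ franklin S, x ≤ M - 1 := by
    rw [hfr]
    intro x hx
    rcases Finset.mem_insert.mp hx with rfl | h
    · omega
    · rcases Finset.mem_insert.mp h with rfl | h'
      · omega
      · have h1 := hub x ((hRmem x).mp h').1
        have h2 := ((hRmem x).mp h').2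
        omega
  have hM1mem : M - 1 ∈ franklin S := by
    rw [hfr]
    rcases Nat.eq_or_lt_of_le ht1 with h1 | h1
    · have hh : M - 1 = M - t := by omega
      rw [hh]
      exact Finset.mem_insert_of_mem (Finset.mem_insert_self _ _)
    · refine Finset.mem_insert_of_mem (Finset.mem_insert_of_mem ?_)
      refine (hRmem _).mpr ⟨?_, by omega⟩
      have hh : M - 1 = M - (1 : ℕ) := rfl
      exact hmem 1 (by omega)
  have hmax' : (franklin S).max' hne' = M - 1 :=
    le_antisymm (Finset.max'_le _ _ _ hub') (Finset.le_max' _ _ hM1mem)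
  have hlb' : ∀ x ∈ franklin S, t ≤ x := by
    rw [hfr]
    intro x hx
    rcases Finset.mem_insert.mp hx with rfl | h
    · omega
    · rcases Finset.mem_insert.mp h with rfl | h'
      · omega
      · have := hlb x ((hRmem x).mp h').1; omega
  have htmem' : t ∈ franklin S := by rw [hfr]; exact Finset.mem_insert_self _ _
  have hmin' : (franklin S).min' hne' = t :=
    le_antisymm (Finset.min'_le _ _ htmem') (Finset.le_min' _ _ _ hlb')
  have hstair' : t ≤ stair (franklin S) hne' := by
    refine Nat.le_findGreatest (by rw [hmax']; omega) ?_
    intro i hi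
    rw [hmax', hfr]
    rcases Nat.eq_or_lt_of_le (Nat.succ_le_of_lt hi) with h1 | h1
    · have hh : M - 1 - i = M - t := by omega
      rw [hh]
      exact Finset.mem_insert_of_mem (Finset.mem_insert_self _ _)
    · refine Finset.mem_insert_of_mem (Finset.mem_insert_of_mem ?_)
      have hh : M - 1 - i = M - (i + 1) := by omega
      rw [hh]
      exact (hRmem _).mpr ⟨hmem (i + 1) (by omega), by omega⟩
  have hff : franklin (franklin S) = S := by
    conv_lhs => rw [franklin]
    rw [dif_pos hne', if_pos (by rw [hmin']; exact hstair'), hmin', hmax']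
    have he1 : M - 1 + 1 = M := by omega
    have he2 : M - 1 - t + 1 = M - t := by omega
    have her1 : (franklin S).erase t = insert (M - t) R := by
      rw [hfr, Finset.erase_insert htnotin]
    rw [he1, he2, her1, Finset.erase_insert hMtnotin, ← hdecomp]
  have hexc' : ¬Exc (franklin S) := by
    rintro ⟨n, hn | hn⟩
    · have hne2 : (Finset.Icc (n + 1) (2 * n)).Nonempty := hn ▸ hne'
      have hn1 : 1 ≤ n := by
        obtain ⟨x, hx⟩ := hne2; rw [Finset.mem_Icc] at hx; omega
      have hMn : M - 1 = 2 * n := by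
        have hx1 : M - 1 ∈ Finset.Icc (n + 1) (2 * n) := hn ▸ hM1mem
        rw [Finset.mem_Icc] at hx1
        have hx2 : (2 * n : ℕ) ∈ franklin S := hn ▸ Finset.mem_Icc.mpr ⟨by omega, le_refl _⟩
        have := hub' _ hx2
        omega
      have htn : t = n + 1 := by
        have hx1 : t ∈ Finset.Icc (n + 1) (2 * n) := hn ▸ htmem'
        rw [Finset.mem_Icc] at hx1
        have hx2 : (n + 1 : ℕ) ∈ franklin S := hn ▸ Finset.mem_Icc.mpr ⟨le_refl _, by omega⟩
        have := hlb' _ hx2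
        omega
      omega
    · have hMn : M - 1 = 2 * n + 1 := by
        have hx1 : M - 1 ∈ Finset.Icc (n + 1) (2 * n + 1) := hn ▸ hM1mem
        rw [Finset.mem_Icc] at hx1
        have hx2 : (2 * n + 1 : ℕ) ∈ franklin S := hn ▸ Finset.mem_Icc.mpr ⟨by omega, le_refl _⟩
        have := hub' _ hx2
        omega
      have htn : t = n + 1 := by
        have hx1 : t ∈ Finset.Icc (n + 1) (2 * n + 1) := hn ▸ htmem'
        rw [Finset.mem_Icc] at hx1
        have hx2 : (n + 1 : ℕ) ∈ franklin S := hn ▸ Finset.mem_Icc.mpr ⟨le_refl _, by omega⟩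
        have := hlb' _ hx2
        omega
      omega
  exact ⟨h0', hsum, hcard, hexc', hff⟩

lemma franklin_good (S : Finset ℕ) (h0 : 0 ∉ S) (hexc : ¬Exc S) :
    0 ∉ franklin S ∧ (∑ x ∈ franklin S, x) = (∑ x ∈ S, x) ∧
      ((franklin S).card + 1 = S.card ∨ S.card + 1 = (franklin S).card) ∧
      ¬Exc (franklin S) ∧ franklin (franklin S) = S := by
  have hne : S.Nonempty := by
    rcases S.eq_empty_or_nonempty with rfl | h
    · exact absurd ⟨0, Or.inl (by simp)⟩ hexc
    · exact h
  rcases le_or_gt (S.min' hne) (stair S hne) with h | h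
  · obtain ⟨a, b, c, d, e⟩ := franklin_caseA S h0 hne hexc h
    exact ⟨a, b, Or.inl c, d, e⟩
  · obtain ⟨a, b, c, d, e⟩ := franklin_caseB S h0 hne hexc h
    exact ⟨a, b, Or.inr c, d, e⟩

/-- Expansion of `∏ (1 - X^i)` over a finset of positive exponents. -/
lemma coeff_prod_one_sub (s : Finset ℕ) (hs : ∀ i ∈ s, 0 < i) (n : ℕ) :
    PowerSeries.coeff n (∏ i ∈ s, (1 - (PowerSeries.X : PowerSeries ℤ) ^ i)) =
      ∑ T ∈ s.powerset, if (∑ x ∈ T, x) = n then (-1 : ℤ) ^ T.card else 0 := by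
  induction s using Finset.induction_on generalizing n with
  | empty => simp [PowerSeries.coeff_one, eq_comm]
  | @insert a s ha ih =>
    have hpos : 0 < a := hs a (Finset.mem_insert_self _ _)
    have hs' : ∀ i ∈ s, 0 < i := fun i hi => hs i (Finset.mem_insert_of_mem hi)
    rw [Finset.prod_insert ha, sub_mul, one_mul, map_sub, ih hs' n, mul_comm,
      PowerSeries.coeff_mul_X_pow', Finset.sum_powerset_insert ha]
    have key : ∀ T ∈ s.powerset,
        (if (∑ x ∈ insert a T, x) = n then (-1 : ℤ) ^ (insert a T).card else 0) =
          -(if a ≤ n ∧ (∑ x ∈ T, x) = n - a then (-1 : ℤ) ^ T.card else 0) := by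
      intro T hT
      have haT : a ∉ T := fun hmem => ha (Finset.mem_powerset.mp hT hmem)
      rw [Finset.sum_insert haT, Finset.card_insert_of_notMem haT]
      split_ifs with hc hd hd
      · rw [pow_succ]; ring
      · exact absurd ⟨by omega, by omega⟩ hd
      · omega
      · simp
    rw [Finset.sum_congr rfl key, Finset.sum_neg_distrib, ← sub_eq_add_neg]
    congr 1
    by_cases han : a ≤ n
    · rw [if_pos han, ih hs' (n - a)]
      refine Finset.sum_congr rfl fun T hT => ?_
      simp [han]
    · rw [if_neg han]
      symm
      refine Finset.sum_eq_zero fun T hT => ?_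
      rw [if_neg (by tauto)]

lemma gauss (a b : ℕ) (h : a ≤ b) :
    2 * (∑ x ∈ Finset.Icc (a + 1) b, x) + (a + 1) * a = (b + 1) * b := by
  have h1 : Finset.Icc (a + 1) b = Finset.Ico (a + 1) (b + 1) := (Finset.Ico_add_one_right_eq_Icc _ _).symm
  have h2 := Finset.sum_Ico_consecutive (fun i => i) (Nat.zero_le (a + 1))
    (by omega : a + 1 ≤ b + 1)
  have h4 := Finset.sum_range_id_mul_two (a + 1)
  have h5 := Finset.sum_range_id_mul_two (b + 1)
  rw [Finset.range_eq_Ico] at h4 h5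
  simp only [Nat.add_sub_cancel] at h4 h5
  rw [h1]
  linarith

lemma card1 (k : ℕ) : (Finset.Icc (k + 1) (2 * k)).card = k := by
  rw [Nat.card_Icc]; omega

lemma card2 (k : ℕ) : (Finset.Icc (k + 1) (2 * k + 1)).card = k + 1 := by
  rw [Nat.card_Icc]; omega

lemma sum1 (k : ℕ) : 2 * (∑ x ∈ Finset.Icc (k + 1) (2 * k), x) = k * (3 * k + 1) := by
  have h := gauss k (2 * k) (by omega)
  nlinarith [h]

lemma sum2 (k : ℕ) :
    2 * (∑ x ∈ Finset.Icc (k + 1) (2 * k + 1), x) = (k + 1) * (3 * k + 2) := by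
  have h := gauss k (2 * k + 1) (by omega)
  nlinarith [h]

lemma sum_exc (m : ℕ) :
    (∑ T ∈ (Finset.Icc 1 (m + 1)).powerset.filter
        (fun T => (∑ x ∈ T, x) = m ∧ Exc T), (-1 : ℤ) ^ T.card) =
      ∑ n ∈ Finset.Icc (-(m : ℤ) - 1) ((m : ℤ) + 1),
        if n * (3 * n - 1) = 2 * (m : ℤ) then (-1 : ℤ) ^ n.natAbs else 0 := by
  have sum1z : ∀ k : ℕ, 2 * ((∑ x ∈ Finset.Icc (k + 1) (2 * k), x : ℕ) : ℤ) =
      (k : ℤ) * (3 * k + 1) := by intro k; exact_mod_cast sum1 k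
  have sum2z : ∀ k : ℕ, 2 * ((∑ x ∈ Finset.Icc (k + 1) (2 * k + 1), x : ℕ) : ℤ) =
      ((k : ℤ) + 1) * (3 * k + 2) := by intro k; exact_mod_cast sum2 k
  rw [← Finset.sum_filter]
  refine Finset.sum_nbij'
    (i := fun T => if 2 * ((∑ x ∈ T, x : ℕ) : ℤ) = (T.card : ℤ) * (3 * T.card - 1)
      then (T.card : ℤ) else -(T.card : ℤ))
    (j := fun n => if 1 ≤ n then Finset.Icc n.toNat (2 * n.toNat - 1)
      else Finset.Icc (n.natAbs + 1) (2 * n.natAbs)) ?_ ?_ ?_ ?_ ?_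
  · -- hi : maps into the pentagonal index set
    intro T hT
    rw [Finset.mem_filter, Finset.mem_powerset] at hT
    obtain ⟨hsub, hsum, k, hk | hk⟩ := hT
    · subst hk
      have hs := sum1 k
      rw [hsum] at hs
      rw [Finset.mem_filter, Finset.mem_Icc]
      rw [card1, sum1z k]
      rcases Nat.eq_zero_or_pos k with rfl | hk1
      · have hm : m = 0 := by omega
        subst hm
        norm_num
      · have hk1' : (1 : ℤ) ≤ (k : ℤ) := by exact_mod_cast hk1
        rw [if_neg (by intro hcon; nlinarith)]
        have hb : k ≤ m := by nlinarith
        refine ⟨⟨by omega, by omega⟩, ?_⟩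
        have hs' : (k : ℤ) * (3 * k + 1) = 2 * m := by exact_mod_cast hs.symm
        linear_combination hs'
    · subst hk
      have hs := sum2 k
      rw [hsum] at hs
      rw [Finset.mem_filter, Finset.mem_Icc]
      rw [card2, sum2z k]
      rw [if_pos (by push_cast; ring)]
      have hb : k ≤ m := by nlinarith
      have hs' : ((k : ℤ) + 1) * (3 * k + 2) = 2 * m := by exact_mod_cast hs.symm
      refine ⟨⟨by push_cast; omega, by push_cast; omega⟩, by push_cast; linear_combination hs'⟩
  · -- hj : inverse maps into the partition set
    intro n hn
    rw [Finset.mem_filter, Finset.mem_Icc] at hn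
    obtain ⟨⟨hn1, hn2⟩, hcond⟩ := hn
    rw [Finset.mem_filter, Finset.mem_powerset]
    by_cases h1n : 1 ≤ n
    · rw [if_pos h1n]
      set u := n.toNat with hu
      have hun : (u : ℤ) = n := Int.toNat_of_nonneg (by omega)
      have hu1 : 1 ≤ u := by omega
      have hIcc : Finset.Icc u (2 * u - 1) = Finset.Icc ((u - 1) + 1) (2 * (u - 1) + 1) := by
        congr 1 <;> omega
      have hs := sum2z (u - 1)
      rw [← hIcc] at hs
      have hcast : ((u - 1 : ℕ) : ℤ) = (u : ℤ) - 1 := by omega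
      rw [hcast] at hs
      have hs' : 2 * ((∑ x ∈ Finset.Icc u (2 * u - 1), x : ℕ) : ℤ) = 2 * m := by
        rw [hs, ← hcond, ← hun]; ring
      have hsummeq : (∑ x ∈ Finset.Icc u (2 * u - 1), x) = m := by omega
      refine ⟨?_, hsummeq, ⟨u - 1, Or.inr (by rw [← hIcc])⟩⟩
      intro x hx
      have hxm : x ≤ m := hsummeq ▸ Finset.single_le_sum
        (f := fun i => i) (fun i _ => Nat.zero_le i) hx
      rw [Finset.mem_Icc] at hx ⊢
      omega
    · rw [if_neg h1n]
      set u := n.natAbs with hu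
      have hun : (u : ℤ) = -n := by omega
      have hs := sum1z u
      have hs' : 2 * ((∑ x ∈ Finset.Icc (u + 1) (2 * u), x : ℕ) : ℤ) = 2 * m := by
        rw [hs, ← hcond, hun]; ring
      have hsummeq : (∑ x ∈ Finset.Icc (u + 1) (2 * u), x) = m := by omega
      refine ⟨?_, hsummeq, ⟨u, Or.inl rfl⟩⟩
      intro x hx
      have hxm : x ≤ m := hsummeq ▸ Finset.single_le_sum
        (f := fun i => i) (fun i _ => Nat.zero_le i) hx
      rw [Finset.mem_Icc] at hx ⊢
      omega
  · -- left inverse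
    intro T hT
    rw [Finset.mem_filter, Finset.mem_powerset] at hT
    obtain ⟨hsub, hsum, k, hk | hk⟩ := hT
    · subst hk
      rw [card1, sum1z k]
      rcases Nat.eq_zero_or_pos k with rfl | hk1
      · norm_num
      · have hk1' : (1 : ℤ) ≤ (k : ℤ) := by exact_mod_cast hk1
        have hcneg : ¬((k : ℤ) * (3 * k + 1) = (k : ℤ) * (3 * k - 1)) := by
          intro hcon; nlinarith
        rw [if_neg hcneg, if_neg (show ¬(1 : ℤ) ≤ -(k : ℤ) by omega)]
        congr 1 <;> omega
    · subst hk
      have hcpos : ((k : ℤ) + 1) * (3 * k + 2) = ((k + 1 : ℕ) : ℤ) * (3 * ((k + 1 : ℕ) : ℤ) - 1) := by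
        push_cast; ring
      rw [card2, sum2z k, if_pos hcpos,
        if_pos (show (1 : ℤ) ≤ ((k + 1 : ℕ) : ℤ) by push_cast; omega)]
      congr 1
  · -- right inverse
    intro n hn
    rw [Finset.mem_filter, Finset.mem_Icc] at hn
    obtain ⟨⟨hn1, hn2⟩, hcond⟩ := hn
    by_cases h1n : 1 ≤ n
    · rw [if_pos h1n]
      set u := n.toNat with hu
      have hun : (u : ℤ) = n := Int.toNat_of_nonneg (by omega)
      have hu1 : 1 ≤ u := by omega
      have hIcc : Finset.Icc u (2 * u - 1) = Finset.Icc ((u - 1) + 1) (2 * (u - 1) + 1) := by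
        congr 1 <;> omega
      have hs := sum2z (u - 1)
      rw [← hIcc] at hs
      have hcast : ((u - 1 : ℕ) : ℤ) = (u : ℤ) - 1 := by omega
      rw [hcast] at hs
      have hc : (Finset.Icc u (2 * u - 1)).card = u := by
        rw [hIcc, card2]; omega
      rw [hc, hs, if_pos (by ring)]
      omega
    · rw [if_neg h1n]
      set u := n.natAbs with hu
      have hun : (u : ℤ) = -n := by omega
      have hs := sum1z u
      rw [card1, hs]
      rcases Nat.eq_zero_or_pos u with hu0 | hu1
      · rw [if_pos (by rw [hu0]; norm_num)]
        omega
      · have hu1' : (1 : ℤ) ≤ (u : ℤ) := by exact_mod_cast hu1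
        rw [if_neg (by intro hcon; nlinarith)]
        omega
  · -- values agree
    intro T hT
    rw [Finset.mem_filter, Finset.mem_powerset] at hT
    obtain ⟨hsub, hsum, k, hk | hk⟩ := hT
    · subst hk
      rw [card1]
      congr 1
      split_ifs <;> omega
    · subst hk
      rw [card2]
      congr 1
      split_ifs <;> omega

lemma sum_nonexc (m : ℕ) :
    (∑ T ∈ (Finset.Icc 1 (m + 1)).powerset.filter
        (fun T => (∑ x ∈ T, x) = m ∧ ¬Exc T), (-1 : ℤ) ^ T.card) = 0 := by
  have hprop : ∀ T ∈ (Finset.Icc 1 (m + 1)).powerset.filter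
      (fun T => (∑ x ∈ T, x) = m ∧ ¬Exc T), 0 ∉ T ∧ (∑ x ∈ T, x) = m ∧ ¬Exc T := by
    intro T hT
    rw [Finset.mem_filter, Finset.mem_powerset] at hT
    refine ⟨fun h0 => ?_, hT.2.1, hT.2.2⟩
    have := hT.1 h0
    simp at this
  refine Finset.sum_involution (fun T _ => franklin T) ?_ ?_ ?_ ?_
  · intro T hT
    obtain ⟨h0, hsum, hexc⟩ := hprop T hT
    obtain ⟨-, -, hcard, -, -⟩ := franklin_good T h0 hexc
    rcases hcard with hc | hc
    · rw [← hc, pow_succ]; ring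
    · rw [← hc, pow_succ]; ring
  · intro T hT _
    obtain ⟨h0, hsum, hexc⟩ := hprop T hT
    obtain ⟨-, -, hcard, -, -⟩ := franklin_good T h0 hexc
    intro heq
    have heq' : franklin T = T := heq
    rw [heq'] at hcard
    omega
  · intro T hT
    obtain ⟨h0, hsum, hexc⟩ := hprop T hT
    obtain ⟨h0', hsum', -, hexc', -⟩ := franklin_good T h0 hexc
    rw [Finset.mem_filter, Finset.mem_powerset]
    refine ⟨fun x hx => ?_, by rw [hsum', hsum], hexc'⟩
    rw [Finset.mem_Icc]
    constructor
    · rcases Nat.eq_zero_or_pos x with rfl | h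
      · exact absurd hx h0'
      · exact h
    · calc x ≤ ∑ y ∈ franklin T, y := Finset.single_le_sum (fun i _ => Nat.zero_le i) hx
        _ = m := by rw [hsum', hsum]
        _ ≤ m + 1 := Nat.le_succ m
  · intro T hT
    obtain ⟨h0, hsum, hexc⟩ := hprop T hT
    exact (franklin_good T h0 hexc).2.2.2.2


/-- Euler's pentagonal number theorem:
`(q;q)_∞ = ∑ n ∈ ℤ, (-1)ⁿ q^{n(3n-1)/2}`. -/
theorem pentagonal_number_theorem :
    fps 1 = PowerSeries.mk fun m =>
      ∑ n ∈ Finset.Icc (-(m : ℤ) - 1) ((m : ℤ) + 1),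
        if n * (3 * n - 1) = 2 * (m : ℤ) then (-1 : ℤ) ^ n.natAbs else 0 := by
  ext m
  rw [PowerSeries.coeff_mk]
  have h1 : (Finset.range (m + 1)).image (· + 1) = Finset.Icc 1 (m + 1) := by
    ext x
    simp only [Finset.mem_image, Finset.mem_range, Finset.mem_Icc]
    constructor
    · rintro ⟨a, ha, rfl⟩; omega
    · intro hx; exact ⟨x - 1, by omega, by omega⟩
  have h2 : PowerSeries.coeff m (fps 1) =
      PowerSeries.coeff m
        (∏ i ∈ Finset.Icc 1 (m + 1), (1 - (PowerSeries.X : PowerSeries ℤ) ^ i)) := by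
    rw [fps, PowerSeries.coeff_mk, ← h1, Finset.prod_image (by intro a _ b _ h; simpa using h)]
    simp
  rw [h2, coeff_prod_one_sub _ (fun i hi => by simp at hi; omega)]
  rw [← Finset.sum_filter, ← Finset.sum_filter_add_sum_filter_not _ Exc,
    Finset.filter_filter, Finset.filter_filter, sum_exc m, sum_nonexc m, add_zero]
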